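/- Let E ⊆ ℝ × ℝ be symmetric (i.e. (α,β) ∈ E implies (β,α) ∈ E) and diagonal (i.e. (α,β) ∈ E implies (α,α) ∈ E and (β,β) ∈ E). Then the separately convex hull of E equals the union over all (α,β) ∈ E of the squares Q_{α,β} = [α,β] × [α,β], where [α,β] denotes the closed segment {tα + (1−t)β : t ∈ [0,1]}. -/
import Mathlib


open Set

/-- Separate convexity (with vectorial components) of a subset of a product space. -/
def SepConvex {α : Type*} [AddCommGroup α] [Module ℝ α] (E : Set (α × α)) : Prop :=
  ∀ p ∈ E, ∀ q ∈ E, ∀ t : ℝ, t ∈ Set.Icc (0:ℝ) 1 → (p.1 = q.1 ∨ p.2 = q.2) →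
    t • p + (1 - t) • q ∈ E

/-- The separately convex hull: smallest separately convex superset. -/
def sepConvexHull {α : Type*} [AddCommGroup α] [Module ℝ α] (E : Set (α × α)) : Set (α × α) :=
  ⋂₀ {F : Set (α × α) | E ⊆ F ∧ SepConvex F}

/-- Diagonalized and symmetrized version Ê of a set E. -/
def hatSet {α : Type*} (E : Set (α × α)) : Set (α × α) :=
  {p ∈ E | (p.1, p.1) ∈ E ∧ (p.2, p.1) ∈ E ∧ (p.2, p.2) ∈ E}

/-- `P` is a maximal Cartesian subset of `E`. -/
def IsMaxCart {α : Type*} (E P : Set (α × α)) : Prop :=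
  ∃ A : Set α, P = A ×ˢ A ∧ P ⊆ E ∧ ∀ B : Set α, A ⊆ B → B ×ˢ B ⊆ E → B = A

lemma seg_mem_iff' (a b x : ℝ) : x ∈ segment ℝ a b ↔ min a b ≤ x ∧ x ≤ max a b := by
  rw [segment_eq_uIcc, Set.uIcc, Set.mem_Icc]

lemma core' {l1 h1 l2 h2 c u v z : ℝ} (hc11 : l1 ≤ c) (hc12 : c ≤ h1)
    (hc21 : l2 ≤ c) (hc22 : c ≤ h2) (hu1 : l1 ≤ u) (hu2 : u ≤ h1)
    (hv1 : l2 ≤ v) (hv2 : v ≤ h2) (hz1 : min u v ≤ z) (hz2 : z ≤ max u v) :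
    (l1 ≤ z ∧ z ≤ h1) ∨ (l2 ≤ z ∧ z ≤ h2) := by
  rcases le_total u v with huv | huv <;>
    simp [min_def, max_def, huv] at hz1 hz2 <;>
    by_cases h : l1 ≤ z ∧ z ≤ h1 <;>
    [exact Or.inl h; skip; exact Or.inl h; skip] <;>
    rcases not_and_or.mp h with h' | h' <;> push_neg at h' <;>
    exact Or.inr ⟨by linarith, by linarith⟩

lemma between_mem_union' {α β γ δ c u v z : ℝ}
    (hc1 : c ∈ segment ℝ α β) (hc2 : c ∈ segment ℝ γ δ)
    (hu : u ∈ segment ℝ α β) (hv : v ∈ segment ℝ γ δ)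
    (hz : z ∈ segment ℝ u v) : z ∈ segment ℝ α β ∨ z ∈ segment ℝ γ δ := by
  simp only [seg_mem_iff'] at hc1 hc2 hu hv hz ⊢
  exact core' hc1.1 hc1.2 hc2.1 hc2.2 hu.1 hu.2 hv.1 hv.2 hz.1 hz.2

lemma comb_mem_segment' {u v t : ℝ} (h0 : 0 ≤ t) (h1 : t ≤ 1) :
    t * u + (1 - t) * v ∈ segment ℝ u v :=
  ⟨t, 1 - t, h0, by linarith, by ring, by simp [smul_eq_mul]⟩

theorem sepConvexHull_eq_union_squares (E : Set (ℝ × ℝ))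
    (hsym : ∀ p ∈ E, (p.2, p.1) ∈ E)
    (hdiag : ∀ p ∈ E, (p.1, p.1) ∈ E ∧ (p.2, p.2) ∈ E) :
    sepConvexHull E = ⋃ p ∈ E, segment ℝ p.1 p.2 ×ˢ segment ℝ p.1 p.2 := by
  apply subset_antisymm
  · apply sInter_subset_of_mem
    constructor
    · intro p hp
      exact mem_biUnion hp ⟨left_mem_segment ℝ p.1 p.2, right_mem_segment ℝ p.1 p.2⟩
    · rintro p hp q hq t ⟨ht0, ht1⟩ hco
      simp only [mem_iUnion, mem_prod] at hp hq ⊢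
      obtain ⟨a, ha, hp1, hp2⟩ := hp
      obtain ⟨b, hb, hq1, hq2⟩ := hq
      have hr1 : (t • p + (1 - t) • q).1 = t * p.1 + (1 - t) * q.1 := rfl
      have hr2 : (t • p + (1 - t) • q).2 = t * p.2 + (1 - t) * q.2 := rfl
      rcases hco with hco | hco
      · have hc2 : p.1 ∈ segment ℝ b.1 b.2 := hco ▸ hq1
        have hr1' : (t • p + (1 - t) • q).1 = p.1 := by rw [hr1, ← hco]; ring
        rcases between_mem_union' hp1 hc2 hp2 hq2
          (hr2 ▸ comb_mem_segment' ht0 ht1) with h | h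
        · exact ⟨a, ha, hr1' ▸ hp1, h⟩
        · exact ⟨b, hb, hr1' ▸ hco ▸ hq1, h⟩
      · have hc2 : p.2 ∈ segment ℝ b.1 b.2 := hco ▸ hq2
        have hr2' : (t • p + (1 - t) • q).2 = p.2 := by rw [hr2, ← hco]; ring
        rcases between_mem_union' hp2 hc2 hp1 hq1
          (hr1 ▸ comb_mem_segment' ht0 ht1) with h | h
        · exact ⟨a, ha, h, hr2' ▸ hp2⟩
        · exact ⟨b, hb, h, hr2' ▸ hco ▸ hq2⟩
  · rintro ⟨x, y⟩ hxy
    simp only [mem_iUnion, mem_prod] at hxy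
    obtain ⟨⟨α, β⟩, hab, hx, hy⟩ := hxy
    intro F hF
    obtain ⟨hEF, hsc⟩ := hF
    obtain ⟨hαα, hββ⟩ := hdiag _ hab
    have hβα := hsym _ hab
    obtain ⟨s, s', hs0, hs'0, hss, hsx⟩ := hx
    obtain ⟨r, r', hr0, hr'0, hrr, hry⟩ := hy
    simp only [smul_eq_mul] at hsx hry
    have hs' : s' = 1 - s := by linarith
    have hr' : r' = 1 - r := by linarith
    rw [hs'] at hsx; rw [hr'] at hry
    have h1 : ((x, β) : ℝ × ℝ) ∈ F := by
      have h := hsc _ (hEF hab) _ (hEF hββ) s ⟨hs0, by linarith⟩ (Or.inr rfl)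
      have e : s • ((α, β) : ℝ × ℝ) + (1 - s) • ((β, β) : ℝ × ℝ) = (x, β) := by
        simp only [Prod.smul_mk, Prod.mk_add_mk, smul_eq_mul, Prod.mk.injEq]
        constructor <;> linarith
      rwa [e] at h
    have h2 : ((x, α) : ℝ × ℝ) ∈ F := by
      have h := hsc _ (hEF hαα) _ (hEF hβα) s ⟨hs0, by linarith⟩ (Or.inr rfl)
      have e : s • ((α, α) : ℝ × ℝ) + (1 - s) • ((β, α) : ℝ × ℝ) = (x, α) := by
        simp only [Prod.smul_mk, Prod.mk_add_mk, smul_eq_mul, Prod.mk.injEq]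
        constructor <;> linarith
      rwa [e] at h
    have h3 := hsc _ h2 _ h1 r ⟨hr0, by linarith⟩ (Or.inl rfl)
    have e : r • ((x, α) : ℝ × ℝ) + (1 - r) • ((x, β) : ℝ × ℝ) = (x, y) := by
      simp only [Prod.smul_mk, Prod.mk_add_mk, smul_eq_mul, Prod.mk.injEq]
      constructor <;> linarith
    rwa [e] at h3
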